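/- For every positive integer n and z ∈ ℂ \ (-∞,0], one has ζ_H(n+1, z) = ((-1)^{n+1}/n!) · ψ^{(n)}(z), where ψ is the digamma function. -/

import Mathlib

open Complex Filter Finset Set Topology

/-- The digamma function `ψ = Γ'/Γ`. -/
noncomputable def digammaC (z : ℂ) : ℂ := deriv Complex.Gamma z / Complex.Gamma z

namespace Stmt2Aux

/-- Partial "log Gamma" approximants. -/
noncomputable def ell (N : ℕ) (z : ℂ) : ℂ :=
  z * Real.log N + Real.log (Nat.factorial N) - ∑ k ∈ Finset.range (N + 1), Complex.log (z + k)

/-- Partial digamma approximants. -/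
noncomputable def hh (N : ℕ) (z : ℂ) : ℂ :=
  (Real.log N : ℂ) - ∑ k ∈ Finset.range (N + 1), (z + (k : ℂ))⁻¹

/-- Iterated derivative approximants. -/
noncomputable def T (n N : ℕ) (z : ℂ) : ℂ :=
  (-1) ^ (n + 1) * (Nat.factorial n : ℂ) * ∑ k ∈ Finset.range (N + 1), ((z + k) ^ (n + 1))⁻¹

lemma mem_slitPlane_add_nat {z : ℂ} (hz : z ∈ Complex.slitPlane) (k : ℕ) :
    z + k ∈ Complex.slitPlane := by
  rw [Complex.mem_slitPlane_iff] at hz ⊢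
  rcases hz with h | h
  · left
    simp only [Complex.add_re, Complex.natCast_re]
    exact add_pos_of_pos_of_nonneg h (Nat.cast_nonneg k)
  · right
    simpa using h

lemma add_nat_ne_zero {z : ℂ} (hz : z ∈ Complex.slitPlane) (k : ℕ) : z + k ≠ 0 :=
  Complex.slitPlane_ne_zero (mem_slitPlane_add_nat hz k)

lemma exp_ell {N : ℕ} (hN : 1 ≤ N) {z : ℂ} (hz : z ∈ Complex.slitPlane) :
    Complex.exp (ell N z) = Complex.GammaSeq z N := by
  have h1 : Complex.exp (z * (Real.log N : ℂ)) = (N : ℂ) ^ z := by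
    rw [Complex.cpow_def_of_ne_zero (Nat.cast_ne_zero.mpr (by omega)), ← Complex.ofReal_natCast,
      ← Complex.ofReal_log (Nat.cast_nonneg N), mul_comm]
  have h2 : Complex.exp ((Real.log (Nat.factorial N) : ℂ)) = (N.factorial : ℂ) := by
    rw [← Complex.ofReal_exp, Real.exp_log (by exact_mod_cast Nat.factorial_pos N)]
    norm_num
  have h3 : Complex.exp (∑ k ∈ Finset.range (N + 1), Complex.log (z + k)) =
      ∏ k ∈ Finset.range (N + 1), (z + k) := by
    rw [Complex.exp_sum]
    exact Finset.prod_congr rfl fun k _ => Complex.exp_log (add_nat_ne_zero hz k)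
  rw [ell, Complex.exp_sub, Complex.exp_add, h1, h2, h3, Complex.GammaSeq]

lemma hasDerivAt_ell (N : ℕ) {z : ℂ} (hz : z ∈ Complex.slitPlane) :
    HasDerivAt (ell N) (hh N z) z := by
  have h1 : HasDerivAt (fun w : ℂ => w * (Real.log N : ℂ) + (Real.log (Nat.factorial N) : ℂ))
      ((Real.log N : ℂ)) z := by
    simpa using ((hasDerivAt_id z).mul_const (Real.log N : ℂ)).add_const (Real.log (Nat.factorial N) : ℂ)
  have h2 : HasDerivAt (fun w : ℂ => ∑ k ∈ Finset.range (N + 1), Complex.log (w + k))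
      (∑ k ∈ Finset.range (N + 1), (z + (k : ℂ))⁻¹) z := by
    apply HasDerivAt.fun_sum
    intro k _
    have := ((hasDerivAt_id z).add_const (k : ℂ)).clog (mem_slitPlane_add_nat hz k)
    simpa [one_div] using this
  have h3 : ell N = fun w : ℂ => w * (Real.log N : ℂ) + (Real.log (N.factorial) : ℂ) -
      ∑ k ∈ Finset.range (N + 1), Complex.log (w + k) := rfl
  rw [h3, hh]
  exact h1.sub h2

lemma hasDerivAt_hh (N : ℕ) {z : ℂ} (hz : z ∈ Complex.slitPlane) :
    HasDerivAt (hh N) (T 1 N z) z := by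
  have h2 : HasDerivAt (fun w : ℂ => ∑ k ∈ Finset.range (N + 1), (w + (k : ℂ))⁻¹)
      (∑ k ∈ Finset.range (N + 1), -(((z + (k : ℂ)) ^ 2)⁻¹)) z := by
    apply HasDerivAt.fun_sum
    intro k _
    have := ((hasDerivAt_id z).add_const (k : ℂ)).inv (add_nat_ne_zero hz k)
    simp [neg_div] at this; exact this
  have h := (hasDerivAt_const z ((Real.log N : ℂ))).sub h2
  refine h.congr_deriv ?_
  symm
  rw [T, zero_sub, ← Finset.sum_neg_distrib]
  norm_num

lemma hasDerivAt_T (n N : ℕ) {z : ℂ} (hz : z ∈ Complex.slitPlane) :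
    HasDerivAt (T n N) (T (n + 1) N z) z := by
  have h2 : HasDerivAt (fun w : ℂ => ∑ k ∈ Finset.range (N + 1), ((w + (k : ℂ)) ^ (n + 1))⁻¹)
      (∑ k ∈ Finset.range (N + 1), (-((n : ℂ) + 1) * ((z + k) ^ (n + 2))⁻¹)) z := by
    apply HasDerivAt.fun_sum
    intro k _
    have hzk := add_nat_ne_zero hz k
    have h := (((hasDerivAt_id z).add_const (k : ℂ)).pow (n + 1)).inv
      (pow_ne_zero _ hzk)
    refine h.congr_deriv ?_
    symm
    simp only [Nat.add_sub_cancel, mul_one, id_eq, Pi.pow_apply]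
    rw [eq_div_iff (pow_ne_zero 2 (pow_ne_zero _ hzk))]
    have hpow : ((z + (k : ℂ)) ^ (n + 1)) ^ 2 = (z + k) ^ (n + 2) * (z + k) ^ n := by ring
    rw [hpow]
    have hne : (z + (k : ℂ)) ^ (n + 2) ≠ 0 := pow_ne_zero _ hzk
    field_simp
    push_cast
    ring
  have h := h2.const_mul ((-1 : ℂ) ^ (n + 1) * (Nat.factorial n : ℂ))
  have : HasDerivAt (T n N)
      ((-1 : ℂ) ^ (n + 1) * (Nat.factorial n : ℂ) *
        ∑ k ∈ Finset.range (N + 1), (-((n : ℂ) + 1) * ((z + k) ^ (n + 2))⁻¹)) z := by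
    exact h
  convert this using 1
  rw [T, Finset.mul_sum, Finset.mul_sum]
  apply Finset.sum_congr rfl
  intro k _
  push_cast [Nat.factorial_succ]
  ring

lemma dist_ell_le {R : ℝ} (hR : 0 ≤ R) {z : ℂ}
    (hzR : ‖z‖ ≤ R) {N : ℕ} (hN1 : 1 ≤ N) (hNR : 2 * R ≤ N) :
    dist (ell N z) (ell (N + 1) z) ≤ (R + R ^ 2) * (1 / (N : ℝ) ^ 2) := by
  have hN0 : (0:ℝ) < N := by exact_mod_cast hN1
  have hN1' : (0:ℝ) < (N:ℝ) + 1 := by positivity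
  set w : ℂ := z / ((N : ℂ) + 1) with hw
  have hNc : ((N:ℂ) + 1) = (((N:ℝ) + 1 : ℝ) : ℂ) := by push_cast; ring
  have hNe : ((N:ℂ) + 1) ≠ 0 := by
    rw [hNc]
    exact_mod_cast ne_of_gt hN1'
  have hnormN : ‖((N:ℂ) + 1)‖ = (N:ℝ) + 1 := by
    rw [show ((N:ℂ) + 1) = ((N + 1 : ℕ) : ℂ) by push_cast; ring, Complex.norm_natCast]
    push_cast
    ring
  have hwn : ‖w‖ ≤ R / ((N:ℝ) + 1) := by
    rw [hw, norm_div, hnormN]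
    gcongr
  have hhalf : R / ((N:ℝ) + 1) < 1 / 2 := by
    rw [div_lt_div_iff₀ hN1' (by norm_num)]
    linarith
  have hw2 : ‖w‖ < 1 / 2 := lt_of_le_of_lt hwn hhalf
  have hw1 : ‖w‖ < 1 := by linarith
  have h1w : (1 : ℂ) + w ≠ 0 := by
    intro h
    have hwm : w = -1 := by linear_combination h
    rw [hwm] at hw1
    simp at hw1
  have hzN : z + ((N:ℂ) + 1) = (((N:ℝ) + 1 : ℝ) : ℂ) * (1 + w) := by
    rw [hw, ← hNc, mul_add, mul_one, mul_div_cancel₀ _ hNe]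
    ring
  have hlog : Complex.log (z + ((N:ℂ) + 1)) =
      (Real.log ((N:ℝ) + 1) : ℂ) + Complex.log (1 + w) := by
    rw [hzN, Complex.log_ofReal_mul hN1' h1w]
  set A : ℝ := Real.log ((N:ℝ) + 1) - Real.log N with hA
  have hfac : Real.log ((N+1).factorial : ℕ) = Real.log ((N:ℝ) + 1) + Real.log (N.factorial : ℕ) := by
    have h1 : (((N+1).factorial : ℕ) : ℝ) = ((N:ℝ) + 1) * ((N.factorial : ℕ) : ℝ) := by
      push_cast [Nat.factorial_succ]; ring
    rw [h1, Real.log_mul (ne_of_gt hN1')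
      (by exact_mod_cast (Nat.factorial_pos N).ne')]
  have hd : ell (N + 1) z - ell N z = z * (A : ℂ) - Complex.log (1 + w) := by
    rw [ell, ell, Finset.sum_range_succ]
    have hcast : ((N + 1 : ℕ) : ℂ) = (N:ℂ) + 1 := by push_cast; ring
    rw [hcast, hlog, hfac, hA]
    push_cast
    ring
  -- bounds on A
  have hAeq : A = Real.log (((N:ℝ) + 1) / N) := by
    rw [hA, Real.log_div (ne_of_gt hN1') (ne_of_gt hN0)]
  have hAub : A ≤ 1 / N := by
    rw [hAeq]
    have := Real.log_le_sub_one_of_pos (show (0:ℝ) < ((N:ℝ)+1)/N by positivity)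
    have h2 : ((N:ℝ)+1)/N - 1 = 1/N := by field_simp; ring
    linarith
  have hAlb : 1 / ((N:ℝ) + 1) ≤ A := by
    have h3 := Real.log_le_sub_one_of_pos (show (0:ℝ) < (N:ℝ)/((N:ℝ)+1) by positivity)
    have h4 : Real.log ((N:ℝ)/((N:ℝ)+1)) = - A := by
      rw [Real.log_div (ne_of_gt hN0) (ne_of_gt hN1'), hA]; ring
    have h5 : (N:ℝ)/((N:ℝ)+1) - 1 = -(1/((N:ℝ)+1)) := by
      field_simp
      ring
    rw [h4, h5] at h3
    linarith
  have habs : |A - 1 / ((N:ℝ) + 1)| ≤ 1 / (N:ℝ) ^ 2 := by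
    have h6 : 1/(N:ℝ) - 1/((N:ℝ)+1) = 1/((N:ℝ)*((N:ℝ)+1)) := by
      rw [div_sub_div _ _ (ne_of_gt hN0) (ne_of_gt hN1')]
      ring_nf
    have h7 : 1/((N:ℝ)*((N:ℝ)+1)) ≤ 1/(N:ℝ)^2 := by
      gcongr
      nlinarith
    rw [abs_le]
    constructor
    · have : (0:ℝ) ≤ 1/(N:ℝ)^2 := by positivity
      linarith
    · linarith
  -- assemble
  rw [dist_eq_norm', hd]
  have split : z * (A : ℂ) - Complex.log (1 + w) =
      z * ((A : ℂ) - ((N:ℂ) + 1)⁻¹) - (Complex.log (1 + w) - w) := by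
    rw [hw]
    field_simp
    ring
  rw [split]
  have t1 : ‖z * ((A : ℂ) - ((N:ℂ) + 1)⁻¹)‖ ≤ R * (1 / (N:ℝ) ^ 2) := by
    rw [norm_mul]
    have : ((A : ℂ) - ((N:ℂ) + 1)⁻¹) = ((A - 1/((N:ℝ)+1) : ℝ) : ℂ) := by
      rw [hNc]
      push_cast
      ring
    rw [this, Complex.norm_real]
    exact mul_le_mul hzR habs (abs_nonneg _) hR
  have t2 : ‖Complex.log (1 + w) - w‖ ≤ R ^ 2 * (1 / (N:ℝ) ^ 2) := by
    have h8 := Complex.norm_log_one_add_sub_self_le hw1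
    have h9 : (1 - ‖w‖)⁻¹ ≤ 2 := by
      have h9a : (1:ℝ)/2 ≤ 1 - ‖w‖ := by linarith
      calc (1 - ‖w‖)⁻¹ ≤ ((1:ℝ)/2)⁻¹ := by
            apply inv_anti₀ (by norm_num) h9a
        _ = 2 := by norm_num
    have h10 : ‖w‖ ^ 2 * (1 - ‖w‖)⁻¹ / 2 ≤ ‖w‖ ^ 2 := by
      have : ‖w‖ ^ 2 * (1 - ‖w‖)⁻¹ ≤ ‖w‖ ^ 2 * 2 := by
        gcongr
      linarith
    have h11 : ‖w‖ ^ 2 ≤ (R / ((N:ℝ)+1)) ^ 2 := by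
      gcongr <;> first | exact norm_nonneg _ | exact hwn
    have h12 : (R / ((N:ℝ)+1)) ^ 2 ≤ R ^ 2 * (1 / (N:ℝ) ^ 2) := by
      rw [div_pow, mul_one_div]
      gcongr
      nlinarith
    linarith
  calc ‖z * ((A : ℂ) - ((N:ℂ) + 1)⁻¹) - (Complex.log (1 + w) - w)‖
      ≤ ‖z * ((A : ℂ) - ((N:ℂ) + 1)⁻¹)‖ + ‖Complex.log (1 + w) - w‖ := norm_sub_le _ _
    _ ≤ R * (1 / (N:ℝ) ^ 2) + R ^ 2 * (1 / (N:ℝ) ^ 2) := add_le_add t1 t2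
    _ = (R + R ^ 2) * (1 / (N:ℝ) ^ 2) := by ring

lemma uniformCauchy_helper {F : ℕ → ℂ → ℂ} {K : Set ℂ} {u : ℕ → ℝ}
    (hu : Summable u) (hu0 : ∀ n, 0 ≤ u n) (N₀ : ℕ)
    (h : ∀ z ∈ K, ∀ n, N₀ ≤ n → dist (F n z) (F (n + 1) z) ≤ u n) :
    UniformCauchySeqOn F atTop K := by
  rw [Metric.uniformCauchySeqOn_iff]
  intro ε hε
  have htail : Tendsto (fun N => ∑' k, u (k + N)) atTop (𝓝 0) := tendsto_sum_nat_add u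
  obtain ⟨N₁, hN₁⟩ := Filter.eventually_atTop.mp (htail.eventually (gt_mem_nhds hε))
  refine ⟨max N₀ N₁, ?_⟩
  have key : ∀ m n, max N₀ N₁ ≤ m → m ≤ n → ∀ z ∈ K, dist (F m z) (F n z) < ε := by
    intro m n hm hmn z hzK
    have h1 : dist (F m z) (F n z) ≤ ∑ i ∈ Finset.Ico m n, u i := by
      apply dist_le_Ico_sum_of_dist_le hmn
      intro k hk1 _
      exact h z hzK k (le_trans (le_trans (le_max_left _ _) hm) hk1)
    have h2 : ∑ i ∈ Finset.Ico m n, u i = ∑ i ∈ Finset.range (n - m), u (i + m) := by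
      rw [Finset.sum_Ico_eq_sum_range]
      exact Finset.sum_congr rfl fun i _ => by rw [add_comm]
    have h3 : ∑ i ∈ Finset.range (n - m), u (i + m) ≤ ∑' i, u (i + m) :=
      Summable.sum_le_tsum _ (fun i _ => hu0 _) ((summable_nat_add_iff m).mpr hu)
    have h4 : ∑' i, u (i + m) < ε := hN₁ m (le_trans (le_max_right _ _) hm)
    calc dist (F m z) (F n z) ≤ ∑ i ∈ Finset.Ico m n, u i := h1
      _ = ∑ i ∈ Finset.range (n - m), u (i + m) := h2
      _ ≤ ∑' i, u (i + m) := h3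
      _ < ε := h4
  intro m hm n hn z hzK
  rcases le_total m n with h' | h'
  · exact key m n hm h' z hzK
  · rw [dist_comm]
    exact key n m hn h' z hzK



noncomputable def LL : ℂ → ℂ := fun z => limUnder atTop (fun N => ell N z)

lemma tlu_ell : TendstoLocallyUniformlyOn ell LL atTop Complex.slitPlane := by
  rw [tendstoLocallyUniformlyOn_iff_forall_isCompact Complex.isOpen_slitPlane]
  intro K hKU hKc
  obtain ⟨r, hr⟩ := hKc.isBounded.subset_closedBall 0
  set R : ℝ := max r 0 with hR
  have hR0 : 0 ≤ R := le_max_right _ _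
  have hzR : ∀ z ∈ K, ‖z‖ ≤ R := by
    intro z hzK
    have := hr hzK
    simp only [Metric.mem_closedBall, Complex.dist_eq, sub_zero] at this
    calc ‖z‖ ≤ r := by simpa [Complex.dist_eq] using this
      _ ≤ R := le_max_left _ _
  have hCauchy : UniformCauchySeqOn ell atTop K := by
    apply uniformCauchy_helper (u := fun N => (R + R ^ 2) * (1 / (N : ℝ) ^ 2))
      ((Real.summable_one_div_nat_pow.mpr one_lt_two).mul_left _)
      (fun n => by positivity) (max 1 (⌈2 * R⌉₊ + 1))
    intro z hzK n hn
    apply dist_ell_le hR0 (hzR z hzK) (le_trans (le_max_left _ _) hn)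
    have h2 : (⌈2 * R⌉₊ : ℝ) ≤ n := by
      exact_mod_cast le_trans (Nat.le_succ _) (le_trans (le_max_right _ _) hn)
    exact le_trans (Nat.le_ceil _) h2
  apply hCauchy.tendstoUniformlyOn_of_tendsto
  intro z hzK
  obtain ⟨a, ha⟩ := cauchySeq_tendsto_of_complete (hCauchy.cauchySeq hzK)
  rwa [show LL z = a from ha.limUnder_eq]

lemma ell_diffOn (N : ℕ) : DifferentiableOn ℂ (ell N) Complex.slitPlane :=
  fun z hz => (hasDerivAt_ell N hz).differentiableAt.differentiableWithinAt

lemma LL_diffOn : DifferentiableOn ℂ LL Complex.slitPlane :=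
  tlu_ell.differentiableOn (Eventually.of_forall ell_diffOn) Complex.isOpen_slitPlane

lemma hasDerivAt_LL {z : ℂ} (hz : z ∈ Complex.slitPlane) : HasDerivAt LL (deriv LL z) z :=
  (LL_diffOn.differentiableAt (Complex.isOpen_slitPlane.mem_nhds hz)).hasDerivAt

lemma Gamma_eq_exp_LL {z : ℂ} (hz : z ∈ Complex.slitPlane) :
    Complex.Gamma z = Complex.exp (LL z) := by
  have h1 := Complex.GammaSeq_tendsto_Gamma z
  have h2 : Tendsto (fun N => Complex.GammaSeq z N) atTop (𝓝 (Complex.exp (LL z))) := by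
    have h3 := (Complex.continuous_exp.continuousAt (x := LL z)).tendsto.comp
      (tlu_ell.tendsto_at hz)
    apply h3.congr'
    filter_upwards [eventually_ge_atTop 1] with N hN
    exact exp_ell hN hz
  exact tendsto_nhds_unique h1 h2

lemma digammaC_eq {z : ℂ} (hz : z ∈ Complex.slitPlane) : digammaC z = deriv LL z := by
  have hexp : HasDerivAt (fun w => Complex.exp (LL w)) (Complex.exp (LL z) * deriv LL z) z :=
    (hasDerivAt_LL hz).cexp
  have hEq : Complex.Gamma =ᶠ[𝓝 z] fun w => Complex.exp (LL w) :=
    Set.EqOn.eventuallyEq_of_mem (fun w hw => Gamma_eq_exp_LL hw)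
      (Complex.isOpen_slitPlane.mem_nhds hz)
  have hder : deriv Complex.Gamma z = Complex.exp (LL z) * deriv LL z := by
    rw [hEq.deriv_eq, hexp.deriv]
  rw [digammaC, hder, Gamma_eq_exp_LL hz]
  exact mul_div_cancel_left₀ _ (Complex.exp_ne_zero _)

lemma tlu_hh : TendstoLocallyUniformlyOn hh (deriv LL) atTop Complex.slitPlane := by
  apply (tlu_ell.deriv (Eventually.of_forall ell_diffOn) Complex.isOpen_slitPlane).congr
  intro N z hz
  exact (hasDerivAt_ell N hz).deriv

lemma tlu_T : ∀ m : ℕ, TendstoLocallyUniformlyOn (T (m + 1))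
    (iteratedDeriv (m + 1) (deriv LL)) atTop Complex.slitPlane := by
  intro m
  induction m with
  | zero =>
    rw [iteratedDeriv_one]
    apply (tlu_hh.deriv (Eventually.of_forall fun N z hz =>
      (hasDerivAt_hh N hz).differentiableAt.differentiableWithinAt)
      Complex.isOpen_slitPlane).congr
    intro N z hz
    exact (hasDerivAt_hh N hz).deriv
  | succ m ih =>
    rw [iteratedDeriv_succ]
    apply (ih.deriv (Eventually.of_forall fun N z hz =>
      (hasDerivAt_T (m + 1) N hz).differentiableAt.differentiableWithinAt)
      Complex.isOpen_slitPlane).congr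
    intro N z hz
    exact (hasDerivAt_T (m + 1) N hz).deriv

lemma eqOn_iteratedDeriv {f g : ℂ → ℂ} (h : Set.EqOn f g Complex.slitPlane) (n : ℕ) :
    Set.EqOn (iteratedDeriv n f) (iteratedDeriv n g) Complex.slitPlane := by
  induction n with
  | zero => simpa [iteratedDeriv_zero] using h
  | succ n ih =>
    intro z hz
    rw [iteratedDeriv_succ, iteratedDeriv_succ]
    exact (ih.eventuallyEq_of_mem (Complex.isOpen_slitPlane.mem_nhds hz)).deriv_eq

lemma exists_eps {z : ℂ} (hz : z ∈ Complex.slitPlane) :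
    ∃ ε > 0, ∀ k : ℕ, ε * ((k : ℝ) + 1) ≤ ‖z + k‖ := by
  set M : ℕ := ⌈2 * ‖z‖⌉₊ + 1 with hM
  have hM1 : 1 ≤ M := by omega
  have hlarge : ∀ k : ℕ, M ≤ k → ((k : ℝ) + 1) / 4 ≤ ‖z + k‖ := by
    intro k hk
    have hk1 : 1 ≤ k := le_trans hM1 hk
    have hzk : 2 * ‖z‖ ≤ (k : ℝ) := by
      have : (2 * ‖z‖) ≤ (⌈2 * ‖z‖⌉₊ : ℝ) := Nat.le_ceil _
      have h2 : ((⌈2 * ‖z‖⌉₊ : ℕ) : ℝ) ≤ (k : ℝ) := by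
        exact_mod_cast le_trans (Nat.le_succ _) hk
      linarith
    have h3 : ‖(k : ℂ)‖ - ‖z‖ ≤ ‖z + k‖ := by
      rw [show z + (k:ℂ) = (k:ℂ) - (-z) by ring, show ‖z‖ = ‖-z‖ from (norm_neg z).symm]
      exact norm_sub_norm_le _ _
    rw [Complex.norm_natCast] at h3
    have hk1' : (1 : ℝ) ≤ (k : ℝ) := by exact_mod_cast hk1
    linarith
  set δ : ℝ := (Finset.range M).inf' (Finset.nonempty_range_iff.mpr (by omega)) (fun k => ‖z + k‖) with hδ
  have hδ0 : 0 < δ := by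
    rw [hδ, Finset.lt_inf'_iff]
    intro k _
    exact norm_pos_iff.mpr (add_nat_ne_zero hz k)
  refine ⟨min (1/4) (δ / M), by positivity, ?_⟩
  intro k
  rcases lt_or_ge k M with hkM | hkM
  · have h5 : min (1/4) (δ / M) * ((k : ℝ) + 1) ≤ (δ / M) * M := by
      apply mul_le_mul (min_le_right _ _)
      · exact_mod_cast Nat.succ_le_of_lt hkM
      · positivity
      · positivity
    have h6 : (δ / M) * M = δ := by
      field_simp
    have h7 : δ ≤ ‖z + k‖ := by
      rw [hδ]
      exact Finset.inf'_le _ (Finset.mem_range.mpr hkM)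
    linarith
  · have h8 : min (1/4) (δ / M) * ((k : ℝ) + 1) ≤ (1/4) * ((k : ℝ) + 1) := by
      apply mul_le_mul_of_nonneg_right (min_le_left _ _)
      positivity
    have h9 := hlarge k hkM
    linarith

lemma summable_pow_inv {z : ℂ} (hz : z ∈ Complex.slitPlane) {n : ℕ} (hn : 1 ≤ n) :
    Summable (fun k : ℕ => ((z + k) ^ (n + 1))⁻¹) := by
  obtain ⟨ε, hε, hεk⟩ := exists_eps hz
  have hsum : Summable (fun k : ℕ => (ε⁻¹) ^ (n + 1) * (1 / ((k : ℝ) + 1) ^ 2)) := by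
    apply Summable.mul_left
    have h0 : Summable (fun k : ℕ => 1 / (k : ℝ) ^ 2) :=
      Real.summable_one_div_nat_pow.mpr one_lt_two
    have h1 := (summable_nat_add_iff 1).mpr h0
    apply h1.congr
    intro k
    push_cast
    ring
  apply Summable.of_norm_bounded hsum
  intro k
  have hk0 : (0:ℝ) < ε * ((k:ℝ) + 1) := by positivity
  have h2 : ‖((z + k) ^ (n + 1))⁻¹‖ = (‖z + k‖ ^ (n + 1))⁻¹ := by
    rw [norm_inv, norm_pow]
  rw [h2]
  have h3 : (ε * ((k:ℝ) + 1)) ^ (n + 1) ≤ ‖z + k‖ ^ (n + 1) :=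
    pow_le_pow_left₀ (le_of_lt hk0) (hεk k) _
  have h4 : (‖z + k‖ ^ (n + 1))⁻¹ ≤ ((ε * ((k:ℝ) + 1)) ^ (n + 1))⁻¹ :=
    inv_anti₀ (by positivity) h3
  have hk1 : (1:ℝ) ≤ (k:ℝ) + 1 := by
    have := Nat.cast_nonneg (α := ℝ) k
    linarith
  have h5 : ((k:ℝ) + 1) ^ 2 ≤ ((k:ℝ) + 1) ^ (n + 1) :=
    pow_le_pow_right₀ hk1 (by omega)
  have h6 : ((((k:ℝ) + 1)) ^ (n + 1))⁻¹ ≤ ((((k:ℝ) + 1)) ^ 2)⁻¹ := inv_anti₀ (by positivity) h5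
  calc (‖z + k‖ ^ (n + 1))⁻¹ ≤ ((ε * ((k:ℝ) + 1)) ^ (n + 1))⁻¹ := h4
    _ = ε⁻¹ ^ (n + 1) * ((((k:ℝ) + 1)) ^ (n + 1))⁻¹ := by
        rw [mul_pow, mul_inv, inv_pow]
    _ ≤ ε⁻¹ ^ (n + 1) * ((((k:ℝ) + 1)) ^ 2)⁻¹ :=
        mul_le_mul_of_nonneg_left h6 (by positivity)
    _ = ε⁻¹ ^ (n + 1) * (1 / ((k:ℝ) + 1) ^ 2) := by rw [one_div]




end Stmt2Aux

theorem stmt_2 (n : ℕ) (hn : 1 ≤ n) (z : ℂ) (hz : ¬(z.im = 0 ∧ z.re ≤ 0)) :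
    ∑' k : ℕ, (z + k) ^ (-((n : ℂ) + 1)) =
      ((-1) ^ (n + 1) / (n.factorial : ℂ)) * iteratedDeriv n digammaC z := by
  have hz' : z ∈ Complex.slitPlane := by
    rw [Complex.mem_slitPlane_iff]
    by_contra h
    push_neg at h
    exact hz ⟨h.2, h.1⟩
  obtain ⟨m, rfl⟩ : ∃ m, n = m + 1 := ⟨n - 1, by omega⟩
  set g : ℕ → ℂ := fun k => ((z + k) ^ (m + 2))⁻¹ with hg
  have hsum : Summable g := Stmt2Aux.summable_pow_inv hz' (by omega : 1 ≤ m + 1)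
  set c : ℂ := (-1) ^ (m + 2) * (Nat.factorial (m + 1) : ℂ) with hc
  have h1 : Tendsto (fun N => Stmt2Aux.T (m + 1) N z) atTop
      (𝓝 (iteratedDeriv (m + 1) (deriv Stmt2Aux.LL) z)) :=
    (Stmt2Aux.tlu_T m).tendsto_at hz'
  have h2 : Tendsto (fun N => Stmt2Aux.T (m + 1) N z) atTop (𝓝 (c * ∑' k, g k)) := by
    have h3 : Tendsto (fun N : ℕ => ∑ k ∈ Finset.range N, g k) atTop (𝓝 (∑' k, g k)) :=
      hsum.hasSum.tendsto_sum_nat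
    have h4 : Tendsto (fun N : ℕ => ∑ k ∈ Finset.range (N + 1), g k) atTop (𝓝 (∑' k, g k)) :=
      h3.comp (Filter.tendsto_add_atTop_nat 1)
    have h5 := h4.const_mul c
    apply h5.congr
    intro N
    rw [Stmt2Aux.T, hc, hg]
  have heq : iteratedDeriv (m + 1) (deriv Stmt2Aux.LL) z = c * ∑' k, g k :=
    tendsto_nhds_unique h1 h2
  have hdig : Set.EqOn digammaC (deriv Stmt2Aux.LL) Complex.slitPlane :=
    fun w hw => Stmt2Aux.digammaC_eq hw
  have htrans : iteratedDeriv (m + 1) digammaC z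
      = iteratedDeriv (m + 1) (deriv Stmt2Aux.LL) z :=
    Stmt2Aux.eqOn_iteratedDeriv hdig (m + 1) hz'
  have hlhs : ∀ k : ℕ, (z + k) ^ (-(((m + 1 : ℕ) : ℂ) + 1)) = g k := by
    intro k
    have : -(((m + 1 : ℕ) : ℂ) + 1) = -(((m + 2 : ℕ) : ℂ)) := by push_cast; ring
    rw [this, Complex.cpow_neg, Complex.cpow_natCast, hg]
  rw [tsum_congr hlhs, htrans, heq, hc]
  have hfacne : ((Nat.factorial (m + 1) : ℂ)) ≠ 0 :=
    Nat.cast_ne_zero.mpr (Nat.factorial_ne_zero _)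
  have hpow : ((-1 : ℂ)) ^ (m + 1 + 1) * ((-1 : ℂ)) ^ (m + 2) = 1 := by
    rw [← pow_add]
    exact Even.neg_one_pow ⟨m + 2, by ring⟩
  field_simp
  have hm2 : ((-1 : ℂ)) ^ (m * 2) = 1 := by rw [mul_comm, pow_mul]; norm_num
  linear_combination (-(∑' (b : ℕ), g b)) * hm2
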